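/- arXiv:2104.08764 — 2 statements merged into one kernel-verified Lean document; each statement's English description precedes it below -/
import Mathlib

section
/- Let 0 < m ≤ L be reals, let A be a real symmetric d×d matrix with m·I_d ⪯ A ⪯ L·I_d, and set κ := L/m. Let G be symmetric with G ⪰ A, let τ ∈ [0,1], and let ν be an admissible direction distribution on ℝ^d. Then ∫ σ_A(Broyd_τ(G, A, u)) dν(u) ≤ (1 − 1/(d·κ)) · σ_A(G). -/
open Matrix MeasureTheory

/-- `σ_A(G) = tr((G - A) A⁻¹)`. -/
noncomputable def sigmaA {d : ℕ} (A G : Matrix (Fin d) (Fin d) ℝ) : ℝ :=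
  ((G - A) * A⁻¹).trace

/-- The Broyden family quasi-Newton update `Broyd_τ(G, A, u)`. -/
noncomputable def Broyd {d : ℕ} (τ : ℝ) (G A : Matrix (Fin d) (Fin d) ℝ) (u : Fin d → ℝ) :
    Matrix (Fin d) (Fin d) ℝ :=
  if G *ᵥ u = A *ᵥ u then G
  else
    τ • (G - (u ⬝ᵥ (A *ᵥ u))⁻¹ •
            (vecMulVec (A *ᵥ u) (u ᵥ* G) + vecMulVec (G *ᵥ u) (u ᵥ* A))
          + ((u ⬝ᵥ (G *ᵥ u)) / (u ⬝ᵥ (A *ᵥ u)) + 1) •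
            ((u ⬝ᵥ (A *ᵥ u))⁻¹ • vecMulVec (A *ᵥ u) (u ᵥ* A)))
      + (1 - τ) • (G - (u ⬝ᵥ ((G - A) *ᵥ u))⁻¹ •
            vecMulVec ((G - A) *ᵥ u) (u ᵥ* (G - A)))

/-- An admissible direction distribution: a probability measure on `ℝ^d` giving no mass to `0`
and with `∫ u uᵀ/(uᵀu) dν = (1/d) I` (entrywise). -/
def IsAdmissible {d : ℕ} (ν : Measure (Fin d → ℝ)) : Prop :=
  IsProbabilityMeasure ν ∧ ν {0} = 0 ∧
    ∀ i j : Fin d, (∫ u, u i * u j / (u ⬝ᵥ u) ∂ν) = if i = j then (d : ℝ)⁻¹ else 0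

namespace BroydenAux

variable {d : ℕ}

lemma quad_nonneg {P : Matrix (Fin d) (Fin d) ℝ} (hP : P.PosSemidef) (x : Fin d → ℝ) :
    0 ≤ x ⬝ᵥ (P *ᵥ x) := by
  simpa using hP.dotProduct_mulVec_nonneg x

lemma dot_symm {P : Matrix (Fin d) (Fin d) ℝ} (hP : P.IsHermitian) (x y : Fin d → ℝ) :
    x ⬝ᵥ (P *ᵥ y) = y ⬝ᵥ (P *ᵥ x) := by
  rw [dotProduct_mulVec, dotProduct_comm, ← mulVec_transpose]
  congr 1
  rw [← conjTranspose_eq_transpose_of_trivial, hP.eq]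

lemma psd_cs {P : Matrix (Fin d) (Fin d) ℝ} (hP : P.PosSemidef) (x y : Fin d → ℝ) :
    (x ⬝ᵥ (P *ᵥ y))^2 ≤ (x ⬝ᵥ (P *ᵥ x)) * (y ⬝ᵥ (P *ᵥ y)) := by
  have key : ∀ t : ℝ, 0 ≤ (y ⬝ᵥ (P *ᵥ y)) * (t * t) + (2 * (x ⬝ᵥ (P *ᵥ y))) * t
      + (x ⬝ᵥ (P *ᵥ x)) := by
    intro t
    have h0 := quad_nonneg hP (x + t • y)
    have hxy := dot_symm hP.1 x y
    simp only [mulVec_add, mulVec_smul, dotProduct_add, add_dotProduct, smul_dotProduct,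
      dotProduct_smul, smul_eq_mul] at h0
    rw [hxy] at h0 ⊢
    ring_nf at h0 ⊢
    linarith
  have h := discrim_le_zero key
  rw [discrim] at h
  nlinarith [h]

lemma psd_quad_zero {P : Matrix (Fin d) (Fin d) ℝ} (hP : P.PosSemidef) {x : Fin d → ℝ}
    (h : x ⬝ᵥ (P *ᵥ x) = 0) : P *ᵥ x = 0 := by
  rw [← hP.dotProduct_mulVec_zero_iff x]
  simpa using h

lemma psd_diag_nonneg {P : Matrix (Fin d) (Fin d) ℝ} (hP : P.PosSemidef) (i : Fin d) :
    0 ≤ P i i := by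
  have := quad_nonneg hP (Pi.single i 1)
  simpa [dotProduct, mulVec, Pi.single_apply, Finset.sum_ite_eq] using this

lemma psd_trace_nonneg {P : Matrix (Fin d) (Fin d) ℝ} (hP : P.PosSemidef) : 0 ≤ P.trace :=
  Finset.sum_nonneg fun i _ => psd_diag_nonneg hP i

lemma trace_mul_psd_nonneg {P Q : Matrix (Fin d) (Fin d) ℝ} (hP : P.PosSemidef)
    (hQ : Q.PosSemidef) : 0 ≤ (P * Q).trace := by
  open scoped MatrixOrder in
  obtain ⟨B, hB⟩ := CStarAlgebra.nonneg_iff_eq_star_mul_self.mp hP.nonneg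
  rw [hB, star_eq_conjTranspose, Matrix.mul_assoc, trace_mul_comm]
  have hsq : (B * Q * Bᴴ).PosSemidef := hQ.mul_mul_conjTranspose_same B
  simpa [Matrix.mul_assoc] using psd_trace_nonneg hsq

lemma trace_vecMulVec_mul (x y : Fin d → ℝ) (M : Matrix (Fin d) (Fin d) ℝ) :
    (vecMulVec x y * M).trace = y ⬝ᵥ (M *ᵥ x) := by
  simp only [Matrix.trace, Matrix.diag, Matrix.mul_apply, vecMulVec_apply, dotProduct, mulVec]
  rw [Finset.sum_comm]
  exact Finset.sum_congr rfl fun k _ => by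
    rw [Finset.mul_sum]; exact Finset.sum_congr rfl fun i _ => by ring

lemma isHermitian_of_isSymm {P : Matrix (Fin d) (Fin d) ℝ} (h : P.IsSymm) : P.IsHermitian := by
  rw [Matrix.IsHermitian, conjTranspose_eq_transpose_of_trivial]; exact h

lemma posdef_of_lower {m : ℝ} (hm : 0 < m) {A : Matrix (Fin d) (Fin d) ℝ} (hAsymm : A.IsSymm)
    (hAlow : (A - m • (1 : Matrix (Fin d) (Fin d) ℝ)).PosSemidef) : A.PosDef := by
  refine .of_dotProduct_mulVec_pos (isHermitian_of_isSymm hAsymm) fun x hx => ?_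
  have h1 := quad_nonneg hAlow x
  have h2 : (0:ℝ) < x ⬝ᵥ x := by
    rcases lt_or_eq_of_le (Finset.sum_nonneg fun i _ => mul_self_nonneg (x i)) with h | h
    · exact h
    · exact absurd (dotProduct_self_eq_zero.mp h.symm) hx
  simp only [sub_mulVec, smul_mulVec, one_mulVec, dotProduct_sub, dotProduct_smul,
    smul_eq_mul] at h1
  simp only [star_trivial]
  nlinarith

lemma broyd_pointwise {m L : ℝ} (hm : 0 < m) (hmL : m ≤ L)
    {A : Matrix (Fin d) (Fin d) ℝ} (hAsymm : A.IsSymm)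
    (hAlow : (A - m • (1 : Matrix (Fin d) (Fin d) ℝ)).PosSemidef)
    (hAup : (L • (1 : Matrix (Fin d) (Fin d) ℝ) - A).PosSemidef)
    {G : Matrix (Fin d) (Fin d) ℝ} (hGA : (G - A).PosSemidef)
    {τ : ℝ} (hτ : τ ∈ Set.Icc (0:ℝ) 1) {u : Fin d → ℝ} (hu : u ≠ 0) :
    sigmaA A (Broyd τ G A u) ≤ sigmaA A G - (u ⬝ᵥ ((G - A) *ᵥ u)) / (L * (u ⬝ᵥ u)) := by
  have hL : 0 < L := lt_of_lt_of_le hm hmL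
  have hA : A.PosDef := posdef_of_lower hm hAsymm hAlow
  have hdet : IsUnit A.det := (Matrix.isUnit_iff_isUnit_det A).mp hA.isUnit
  have hAA : A * A⁻¹ = 1 := Matrix.mul_nonsing_inv A hdet
  have hA'A : A⁻¹ * A = 1 := Matrix.nonsing_inv_mul A hdet
  have hS : 0 < u ⬝ᵥ u := by
    rcases lt_or_eq_of_le (Finset.sum_nonneg fun i _ => mul_self_nonneg (u i)) with h | h
    · exact h
    · exact absurd (dotProduct_self_eq_zero.mp h.symm) hu
  have ha : 0 < u ⬝ᵥ (A *ᵥ u) := by simpa using hA.dotProduct_mulVec_pos hu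
  have haL : u ⬝ᵥ (A *ᵥ u) ≤ L * (u ⬝ᵥ u) := by
    have h1 := quad_nonneg hAup u
    simp only [sub_mulVec, smul_mulVec, one_mulVec, dotProduct_sub, dotProduct_smul,
      smul_eq_mul] at h1
    linarith
  by_cases hGu : G *ᵥ u = A *ᵥ u
  · have hz : u ⬝ᵥ ((G - A) *ᵥ u) = 0 := by rw [sub_mulVec, hGu, sub_self, dotProduct_zero]
    rw [Broyd, if_pos hGu, hz]
    simp
  · set v : Fin d → ℝ := (G - A) *ᵥ u with hvdef
    set r : ℝ := u ⬝ᵥ ((G - A) *ᵥ u) with hrdef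
    have hv : v ≠ 0 := by rw [hvdef, sub_mulVec]; exact sub_ne_zero.mpr hGu
    have hr0 : 0 ≤ r := quad_nonneg hGA u
    have hr : 0 < r := hr0.lt_of_ne fun h => hv (psd_quad_zero hGA h.symm)
    set s : ℝ := v ⬝ᵥ (A⁻¹ *ᵥ v) with hsdef
    have key1 : (vecMulVec (A *ᵥ u) (u ᵥ* G) * A⁻¹).trace = u ⬝ᵥ (G *ᵥ u) := by
      rw [trace_vecMulVec_mul, mulVec_mulVec, hA'A, one_mulVec]
      exact (dotProduct_mulVec u G u).symm
    have key2 : (vecMulVec (G *ᵥ u) (u ᵥ* A) * A⁻¹).trace = u ⬝ᵥ (G *ᵥ u) := by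
      rw [trace_vecMulVec_mul, ← dotProduct_mulVec, mulVec_mulVec, hAA, one_mulVec]
    have key3 : (vecMulVec (A *ᵥ u) (u ᵥ* A) * A⁻¹).trace = u ⬝ᵥ (A *ᵥ u) := by
      rw [trace_vecMulVec_mul, mulVec_mulVec, hA'A, one_mulVec]
      exact (dotProduct_mulVec u A u).symm
    have key4 : (vecMulVec v (u ᵥ* (G - A)) * A⁻¹).trace = s := by
      rw [trace_vecMulVec_mul, ← dotProduct_mulVec, dot_symm hGA.1 u (A⁻¹ *ᵥ v), hsdef, hvdef]
      exact dotProduct_comm _ _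
    have hBroyd : sigmaA A (Broyd τ G A u)
        = τ * (sigmaA A G - r / (u ⬝ᵥ (A *ᵥ u))) + (1 - τ) * (sigmaA A G - s / r) := by
      rw [Broyd, if_neg hGu, sigmaA]
      have hsplit :
          (τ • (G - (u ⬝ᵥ (A *ᵥ u))⁻¹ •
              (vecMulVec (A *ᵥ u) (u ᵥ* G) + vecMulVec (G *ᵥ u) (u ᵥ* A))
            + ((u ⬝ᵥ (G *ᵥ u)) / (u ⬝ᵥ (A *ᵥ u)) + 1) •
              ((u ⬝ᵥ (A *ᵥ u))⁻¹ • vecMulVec (A *ᵥ u) (u ᵥ* A)))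
          + (1 - τ) • (G - (u ⬝ᵥ ((G - A) *ᵥ u))⁻¹ •
              vecMulVec ((G - A) *ᵥ u) (u ᵥ* (G - A)))) - A
          = τ • ((G - A) - (u ⬝ᵥ (A *ᵥ u))⁻¹ • vecMulVec (A *ᵥ u) (u ᵥ* G)
                - (u ⬝ᵥ (A *ᵥ u))⁻¹ • vecMulVec (G *ᵥ u) (u ᵥ* A)
                + (((u ⬝ᵥ (G *ᵥ u)) / (u ⬝ᵥ (A *ᵥ u)) + 1) * (u ⬝ᵥ (A *ᵥ u))⁻¹) •
                  vecMulVec (A *ᵥ u) (u ᵥ* A))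
            + (1 - τ) • ((G - A) - (u ⬝ᵥ ((G - A) *ᵥ u))⁻¹ •
                vecMulVec ((G - A) *ᵥ u) (u ᵥ* (G - A))) := by
        module
      rw [hsplit, ← hrdef, ← hvdef]
      simp only [Matrix.add_mul, Matrix.sub_mul, Matrix.smul_mul, trace_add, trace_sub,
        trace_smul, key1, key2, key3, key4, smul_eq_mul]
      have hfold : sigmaA A G = (G * A⁻¹).trace - (A * A⁻¹).trace := by
        rw [sigmaA, Matrix.sub_mul, trace_sub]
      rw [hfold]
      have hg : u ⬝ᵥ (G *ᵥ u) = r + u ⬝ᵥ (A *ᵥ u) := by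
        rw [hrdef, sub_mulVec, dotProduct_sub]; ring
      rw [hg]
      field_simp [ha.ne', hr.ne']
      ring
    rw [hBroyd]
    have hvv : 0 < v ⬝ᵥ v := by
      rcases lt_or_eq_of_le (Finset.sum_nonneg fun i _ => mul_self_nonneg (v i)) with h | h
      · exact h
      · exact absurd (dotProduct_self_eq_zero.mp h.symm) hv
    have hs0 : 0 ≤ s := quad_nonneg hA.inv.posSemidef v
    have hcs1 : r^2 ≤ (u ⬝ᵥ u) * (v ⬝ᵥ v) := by
      have := psd_cs (Matrix.PosSemidef.one) u v
      simpa [one_mulVec, hrdef] using this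
    have hcs2 : (v ⬝ᵥ v)^2 ≤ (v ⬝ᵥ (A *ᵥ v)) * s := by
      have h := psd_cs hA.posSemidef v (A⁻¹ *ᵥ v)
      rw [mulVec_mulVec, hAA, one_mulVec] at h
      rwa [dotProduct_comm (A⁻¹ *ᵥ v) v] at h
    have hvA : v ⬝ᵥ (A *ᵥ v) ≤ L * (v ⬝ᵥ v) := by
      have h1 := quad_nonneg hAup v
      simp only [sub_mulVec, smul_mulVec, one_mulVec, dotProduct_sub, dotProduct_smul,
        smul_eq_mul] at h1
      linarith
    have hvvLs : v ⬝ᵥ v ≤ L * s := by nlinarith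
    have h2 : r / (L * (u ⬝ᵥ u)) ≤ s / r := by
      rw [div_le_div_iff₀ (by positivity) hr]
      nlinarith
    have h1 : r / (L * (u ⬝ᵥ u)) ≤ r / (u ⬝ᵥ (A *ᵥ u)) := by gcongr
    have e1 := mul_le_mul_of_nonneg_left h1 hτ.1
    have e2 := mul_le_mul_of_nonneg_left h2 (by linarith [hτ.2] : (0:ℝ) ≤ 1 - τ)
    linarith

lemma trace_bound {m : ℝ} (hm : 0 < m) {A : Matrix (Fin d) (Fin d) ℝ} (hA : A.PosDef)
    (hAlow : (A - m • (1 : Matrix (Fin d) (Fin d) ℝ)).PosSemidef)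
    {G : Matrix (Fin d) (Fin d) ℝ} (hGA : (G - A).PosSemidef) :
    m * sigmaA A G ≤ (G - A).trace := by
  have hdet : IsUnit A.det := (Matrix.isUnit_iff_isUnit_det A).mp hA.isUnit
  have hAA : A * A⁻¹ = 1 := Matrix.mul_nonsing_inv A hdet
  have hQ : ((1 : Matrix (Fin d) (Fin d) ℝ) - m • A⁻¹).PosSemidef := by
    refine .of_dotProduct_mulVec_nonneg ?_ ?_
    · have hit : A⁻¹ᵀ = A⁻¹ := by
        rw [← conjTranspose_eq_transpose_of_trivial]; exact hA.inv.1.eq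
      simp [Matrix.IsHermitian, conjTranspose_sub, conjTranspose_smul, hit]
    · intro w
      simp only [star_trivial, sub_mulVec, smul_mulVec, one_mulVec, dotProduct_sub,
        dotProduct_smul, smul_eq_mul]
      set z := A⁻¹ *ᵥ w with hzdef
      have hw : A *ᵥ z = w := by rw [hzdef, mulVec_mulVec, hAA, one_mulVec]
      have h1 : w ⬝ᵥ z = z ⬝ᵥ (A *ᵥ z) := by
        calc w ⬝ᵥ z = (A *ᵥ z) ⬝ᵥ z := by rw [hw]
        _ = z ⬝ᵥ (A *ᵥ z) := dotProduct_comm _ _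
      have h2 : w ⬝ᵥ w = (A *ᵥ z) ⬝ᵥ (A *ᵥ z) := by rw [← hw]
      rw [h1, h2]
      have hcs := psd_cs (Matrix.PosSemidef.one) z (A *ᵥ z)
      simp only [one_mulVec] at hcs
      have hlow := quad_nonneg hAlow z
      simp only [sub_mulVec, smul_mulVec, one_mulVec, dotProduct_sub, dotProduct_smul,
        smul_eq_mul] at hlow
      have hlow' : m * (z ⬝ᵥ z) ≤ z ⬝ᵥ (A *ᵥ z) := by linarith
      have hzz : 0 ≤ z ⬝ᵥ z := Finset.sum_nonneg fun i _ => mul_self_nonneg (z i)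
      have hn2 : 0 ≤ (A *ᵥ z) ⬝ᵥ (A *ᵥ z) := Finset.sum_nonneg fun i _ => mul_self_nonneg _
      have hq0 : 0 ≤ z ⬝ᵥ (A *ᵥ z) := by nlinarith
      rcases eq_or_lt_of_le hq0 with h | h
      · nlinarith
      · nlinarith [mul_le_mul_of_nonneg_right hlow' hn2]
  have h0 := trace_mul_psd_nonneg hGA hQ
  have hexp : (G - A) * ((1 : Matrix (Fin d) (Fin d) ℝ) - m • A⁻¹)
      = (G - A) - m • ((G - A) * A⁻¹) := by
    rw [Matrix.mul_sub, Matrix.mul_one, Matrix.mul_smul]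
  rw [hexp, trace_sub, trace_smul] at h0
  simp only [smul_eq_mul] at h0
  rw [sigmaA]
  linarith

end BroydenAux

open BroydenAux

/-- Expected one-step decrease of `σ_A` under a random Broyden family update:
`∫ σ_A(Broyd_τ(G,A,u)) dν(u) ≤ (1 − 1/(dκ)) σ_A(G)` with `κ = L/m`. -/
theorem sigma_broyden_expected_decrease
    {d : ℕ} {m L : ℝ} (hm : 0 < m) (hmL : m ≤ L)
    {A : Matrix (Fin d) (Fin d) ℝ} (hAsymm : A.IsSymm)
    (hAlow : (A - m • (1 : Matrix (Fin d) (Fin d) ℝ)).PosSemidef)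
    (hAup : (L • (1 : Matrix (Fin d) (Fin d) ℝ) - A).PosSemidef)
    {G : Matrix (Fin d) (Fin d) ℝ} (hGsymm : G.IsSymm) (hGA : (G - A).PosSemidef)
    {τ : ℝ} (hτ : τ ∈ Set.Icc (0 : ℝ) 1)
    (ν : Measure (Fin d → ℝ)) (hν : IsAdmissible ν) :
    (∫ u, sigmaA A (Broyd τ G A u) ∂ν) ≤ (1 - 1 / (d * (L / m))) * sigmaA A G := by
  obtain ⟨hprob, hzero, hmom⟩ := hν
  haveI := hprob
  have hL : 0 < L := lt_of_lt_of_le hm hmL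
  have hA : A.PosDef := posdef_of_lower hm hAsymm hAlow
  have hd : 1 ≤ d := by
    rcases Nat.eq_zero_or_pos d with h | h
    · exfalso
      subst h
      have huniv : ({0} : Set (Fin 0 → ℝ)) = Set.univ := by
        ext x
        simp [Subsingleton.elim x 0]
      rw [huniv, measure_univ] at hzero
      exact one_ne_zero hzero
    · exact h
  have hd0 : (0:ℝ) < (d:ℝ) := by exact_mod_cast hd
  have hσ : 0 ≤ sigmaA A G := by
    have := trace_mul_psd_nonneg hGA hA.inv.posSemidef
    simpa [sigmaA] using this
  have htr : m * sigmaA A G ≤ (G - A).trace := trace_bound hm hA hAlow hGA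
  have hdk : (1:ℝ) ≤ (d:ℝ) * (L/m) := by
    have h2 : (1:ℝ) ≤ L/m := (one_le_div hm).mpr hmL
    have h1 : (1:ℝ) ≤ (d:ℝ) := by exact_mod_cast hd
    nlinarith
  have hRHS0 : 0 ≤ (1 - 1/((d:ℝ) * (L/m))) * sigmaA A G := by
    apply mul_nonneg _ hσ
    rw [sub_nonneg, div_le_one (by linarith)]
    linarith
  by_cases hf : Integrable (fun u => sigmaA A (Broyd τ G A u)) ν
  swap
  · rw [integral_undef hf]; exact hRHS0
  · have hint : ∀ i j : Fin d,
        Integrable (fun u : Fin d → ℝ => (G - A) i j * (u i * u j / (u ⬝ᵥ u))) ν := by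
      intro i j
      apply Integrable.const_mul
      have hmeas : Measurable (fun u : Fin d → ℝ => u i * u j / (u ⬝ᵥ u)) := by
        apply Measurable.div
        · exact (measurable_pi_apply i).mul (measurable_pi_apply j)
        · simp only [dotProduct]
          exact Finset.measurable_sum _ fun k _ => (measurable_pi_apply k).mul (measurable_pi_apply k)
      apply Integrable.mono' (integrable_const (1:ℝ)) hmeas.aestronglyMeasurable
      filter_upwards with u
      have hS0 : 0 ≤ u ⬝ᵥ u := Finset.sum_nonneg fun k _ => mul_self_nonneg (u k)
      rcases eq_or_lt_of_le hS0 with h | h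
      · rw [← h]
        simp
      · have hi : u i * u i ≤ u ⬝ᵥ u :=
          Finset.single_le_sum (f := fun k => u k * u k) (fun k _ => mul_self_nonneg (u k))
            (Finset.mem_univ i)
        have hj : u j * u j ≤ u ⬝ᵥ u :=
          Finset.single_le_sum (f := fun k => u k * u k) (fun k _ => mul_self_nonneg (u k))
            (Finset.mem_univ j)
        rw [Real.norm_eq_abs, abs_div, abs_of_pos h, div_le_one h, abs_mul]
        nlinarith [abs_nonneg (u i), abs_nonneg (u j), abs_mul_abs_self (u i),
          abs_mul_abs_self (u j)]
    have hsumint : Integrable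
        (fun u : Fin d → ℝ => (∑ i, ∑ j, (G - A) i j * (u i * u j / (u ⬝ᵥ u))) / L) ν := by
      apply Integrable.div_const
      exact integrable_finset_sum _ fun i _ => integrable_finset_sum _ fun j _ => hint i j
    have hgint : Integrable (fun u : Fin d → ℝ =>
        sigmaA A G - (∑ i, ∑ j, (G - A) i j * (u i * u j / (u ⬝ᵥ u))) / L) ν :=
      (integrable_const _).sub hsumint
    have hae : ∀ᵐ u ∂ν, u ≠ 0 := by
      rw [ae_iff]
      have : {u : Fin d → ℝ | ¬ u ≠ 0} = {0} := by ext x; simp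
      rw [this]; exact hzero
    have hle : (fun u => sigmaA A (Broyd τ G A u)) ≤ᶠ[ae ν]
        (fun u : Fin d → ℝ =>
          sigmaA A G - (∑ i, ∑ j, (G - A) i j * (u i * u j / (u ⬝ᵥ u))) / L) := by
      filter_upwards [hae] with u hu
      have hb := broyd_pointwise hm hmL hAsymm hAlow hAup hGA hτ hu
      have hS : 0 < u ⬝ᵥ u := by
        rcases lt_or_eq_of_le (Finset.sum_nonneg fun k _ => mul_self_nonneg (u k)) with h | h
        · exact h
        · exact absurd (dotProduct_self_eq_zero.mp h.symm) hu
      have hsum : (∑ i, ∑ j, (G - A) i j * (u i * u j / (u ⬝ᵥ u)))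
          = (u ⬝ᵥ ((G - A) *ᵥ u)) / (u ⬝ᵥ u) := by
        have h1 : u ⬝ᵥ ((G - A) *ᵥ u) = ∑ i, ∑ j, u i * ((G - A) i j * u j) := by
          simp only [dotProduct, mulVec]
          exact Finset.sum_congr rfl fun i _ => Finset.mul_sum _ _ _
        rw [h1, Finset.sum_div]
        refine Finset.sum_congr rfl fun i _ => ?_
        rw [Finset.sum_div]
        refine Finset.sum_congr rfl fun j _ => ?_
        rw [← mul_div_assoc]
        congr 1
        ring
      have heq : (u ⬝ᵥ ((G - A) *ᵥ u)) / (u ⬝ᵥ u) / L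
          = (u ⬝ᵥ ((G - A) *ᵥ u)) / (L * (u ⬝ᵥ u)) := by
        rw [div_div, mul_comm]
      simp only [hsum, heq]
      exact hb
    have hmain := integral_mono_ae hf hgint hle
    have hgval : (∫ u, (sigmaA A G
          - (∑ i, ∑ j, (G - A) i j * (u i * u j / (u ⬝ᵥ u))) / L) ∂ν)
        = sigmaA A G - ((G - A).trace / d) / L := by
      rw [integral_sub (integrable_const _) hsumint, integral_const]
      simp only [measureReal_def, measure_univ, ENNReal.toReal_one, one_smul]
      congr 1
      rw [integral_div]
      congr 1
      rw [integral_finset_sum _ fun i _ => integrable_finset_sum _ fun j _ => hint i j]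
      have : ∀ i : Fin d, (∫ u, ∑ j, (G - A) i j * (u i * u j / (u ⬝ᵥ u)) ∂ν)
          = ∑ j, (G - A) i j * (if i = j then (d:ℝ)⁻¹ else 0) := by
        intro i
        rw [integral_finset_sum _ fun j _ => hint i j]
        refine Finset.sum_congr rfl fun j _ => ?_
        rw [integral_const_mul, hmom i j]
      rw [Finset.sum_congr rfl fun i _ => this i]
      simp only [mul_ite, mul_zero, Finset.sum_ite_eq, Finset.mem_univ, if_true]
      rw [Matrix.trace]
      simp only [Matrix.diag]
      rw [Finset.sum_div]
      exact Finset.sum_congr rfl fun i _ => by rw [div_eq_mul_inv]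
    rw [hgval] at hmain
    refine hmain.trans ?_
    have e1 : (1 - 1/((d:ℝ)*(L/m))) * sigmaA A G
        = sigmaA A G - (m * sigmaA A G)/((d:ℝ)*L) := by
      field_simp
    have e2 : ((G - A).trace / (d:ℝ))/L = (G - A).trace / ((d:ℝ)*L) := by
      rw [div_div]
    rw [e1, e2]
    have hfin : (m * sigmaA A G)/((d:ℝ)*L) ≤ (G - A).trace/((d:ℝ)*L) := by
      apply div_le_div_of_nonneg_right htr
      positivity
    linarith
end

section
/- Let R be a real symmetric positive semidefinite d×d matrix and u ∈ ℝ^d with Ru ≠ 0, and set R' := R − (R u uᵀ R)/(uᵀ R u). Then: (i) R' is positive semidefinite; (ii) R'u = 0; (iii) R'v = 0 for every v with Rv = 0; and consequently (iv) rank(R') ≤ rank(R) − 1. -/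
open Matrix

lemma vecMulVec_mulVec' {d : ℕ} (w v x : Fin d → ℝ) :
    vecMulVec w v *ᵥ x = (v ⬝ᵥ x) • w := by
  ext i
  simp [mulVec, dotProduct, vecMulVec_apply, Finset.mul_sum, mul_comm, mul_left_comm]

/-- One SR1 residual step `R' = R − (Ruuᵀ R)/(uᵀRu)`:
positivity is preserved, `u` and `ker R` are annihilated, and rank drops by one. -/
theorem SR1_residual_step
    {d : ℕ} {R : Matrix (Fin d) (Fin d) ℝ} (hR : R.PosSemidef)
    {u : Fin d → ℝ} (hu : R *ᵥ u ≠ 0) :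
    let R' := R - (u ⬝ᵥ (R *ᵥ u))⁻¹ • vecMulVec (R *ᵥ u) (u ᵥ* R)
    R'.PosSemidef ∧ R' *ᵥ u = 0 ∧ (∀ v : Fin d → ℝ, R *ᵥ v = 0 → R' *ᵥ v = 0) ∧
      R'.rank ≤ R.rank - 1 := by
  intro R'
  have hsymm : Rᵀ = R := hR.1
  have hvm : u ᵥ* R = R *ᵥ u := by
    rw [← hsymm, vecMul_transpose, hsymm]
  set c : ℝ := u ⬝ᵥ (R *ᵥ u) with hc
  have hc0 : c ≠ 0 := by
    intro h
    exact hu ((hR.dotProduct_mulVec_zero_iff u).mp (by simpa using h))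
  have hcpos : 0 < c := lt_of_le_of_ne (by simpa using hR.dotProduct_mulVec_nonneg u) (Ne.symm hc0)
  -- action of R' on a vector
  have hR'mv : ∀ x, R' *ᵥ x = R *ᵥ x - (c⁻¹ * (u ⬝ᵥ (R *ᵥ x))) • (R *ᵥ u) := by
    intro x
    simp only [R', sub_mulVec, smul_mulVec, hvm, vecMulVec_mulVec']
    rw [dotProduct_comm]
    rw [smul_smul]
    congr 2
    rw [dotProduct_mulVec, hvm, dotProduct_comm]
  -- symmetry of bilinear form
  have hvm' : ∀ x : Fin d → ℝ, x ᵥ* R = R *ᵥ x := by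
    intro x; rw [← hsymm, vecMul_transpose, hsymm]
  have hbil : ∀ x y : Fin d → ℝ, x ⬝ᵥ (R *ᵥ y) = y ⬝ᵥ (R *ᵥ x) := by
    intro x y
    rw [dotProduct_mulVec, hvm', dotProduct_comm]
  -- quadratic form of R'
  have hquad : ∀ x, x ⬝ᵥ (R' *ᵥ x) = x ⬝ᵥ (R *ᵥ x) - c⁻¹ * (u ⬝ᵥ (R *ᵥ x))^2 := by
    intro x
    rw [hR'mv x, dotProduct_sub, dotProduct_smul]
    have : x ⬝ᵥ (R *ᵥ u) = u ⬝ᵥ (R *ᵥ x) := hbil x u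
    rw [this]; simp only [smul_eq_mul]; ring
  -- Cauchy-Schwarz
  have hCS : ∀ x, (u ⬝ᵥ (R *ᵥ x))^2 ≤ c * (x ⬝ᵥ (R *ᵥ x)) := by
    intro x
    set b : ℝ := u ⬝ᵥ (R *ᵥ x) with hb
    have key : 0 ≤ (x - (b / c) • u) ⬝ᵥ (R *ᵥ (x - (b / c) • u)) := by
      simpa using hR.dotProduct_mulVec_nonneg (x - (b / c) • u)
    have hexp : (x - (b / c) • u) ⬝ᵥ (R *ᵥ (x - (b / c) • u))
        = x ⬝ᵥ (R *ᵥ x) - 2 * (b / c) * b + (b / c)^2 * c := by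
      rw [mulVec_sub, mulVec_smul, dotProduct_sub, sub_dotProduct, sub_dotProduct,
        smul_dotProduct, dotProduct_smul, smul_dotProduct, dotProduct_smul]
      have h1 : u ⬝ᵥ (R *ᵥ x) = b := rfl
      have h2 : x ⬝ᵥ (R *ᵥ u) = b := hbil x u
      have h3 : u ⬝ᵥ (R *ᵥ u) = c := rfl
      rw [h1, h2, h3]; simp only [smul_eq_mul]; ring
    rw [hexp] at key
    have hb' : b = (b / c) * c := by field_simp
    nlinarith [mul_nonneg hcpos.le key, sq_nonneg (b/c)]
  -- (i) PSD
  have hR'psd : R'.PosSemidef := by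
    refine Matrix.PosSemidef.of_dotProduct_mulVec_nonneg ?_ ?_
    · -- Hermitian
      have : R'ᵀ = R' := by
        simp only [R', transpose_sub, transpose_smul, hsymm]
        congr 1
        ext i j
        simp [vecMulVec_apply, hvm, mul_comm]
      simpa [Matrix.IsHermitian, conjTranspose_eq_transpose_of_trivial] using this
    · intro x
      have := hCS x
      have h := hquad x
      simp only [star_trivial]
      rw [h]
      have hcinv : 0 < c⁻¹ := inv_pos.mpr hcpos
      have h2 : c⁻¹ * (u ⬝ᵥ (R *ᵥ x))^2 ≤ c⁻¹ * (c * (x ⬝ᵥ (R *ᵥ x))) :=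
        mul_le_mul_of_nonneg_left (hCS x) hcinv.le
      rw [← mul_assoc, inv_mul_cancel₀ hc0, one_mul] at h2
      linarith
  -- (ii)
  have hR'u : R' *ᵥ u = 0 := by
    rw [hR'mv u, ← hc, inv_mul_cancel₀ hc0, one_smul, sub_self]
  -- (iii)
  have hker : ∀ v : Fin d → ℝ, R *ᵥ v = 0 → R' *ᵥ v = 0 := by
    intro v hv
    rw [hR'mv v, hv, dotProduct_zero, mul_zero, zero_smul, sub_zero]
  refine ⟨hR'psd, hR'u, hker, ?_⟩
  -- (iv) rank
  have hKle : LinearMap.ker R.mulVecLin ≤ LinearMap.ker R'.mulVecLin := by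
    intro v hv
    rw [LinearMap.mem_ker, mulVecLin_apply] at *
    exact hker v hv
  have huK' : u ∈ LinearMap.ker R'.mulVecLin := by
    rw [LinearMap.mem_ker, mulVecLin_apply]; exact hR'u
  have huK : u ∉ LinearMap.ker R.mulVecLin := by
    rw [LinearMap.mem_ker, mulVecLin_apply]; exact hu
  have hlt : LinearMap.ker R.mulVecLin < LinearMap.ker R'.mulVecLin :=
    lt_of_le_of_ne hKle (fun h => huK (h ▸ huK'))
  have hdimlt : Module.finrank ℝ (LinearMap.ker R.mulVecLin)
      < Module.finrank ℝ (LinearMap.ker R'.mulVecLin) :=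
    Submodule.finrank_lt_finrank_of_lt hlt
  have h1 : R.rank + Module.finrank ℝ (LinearMap.ker R.mulVecLin) = d := by
    rw [Matrix.rank]
    rw [LinearMap.finrank_range_add_finrank_ker R.mulVecLin]
    simp
  have h2 : R'.rank + Module.finrank ℝ (LinearMap.ker R'.mulVecLin) = d := by
    rw [Matrix.rank]
    rw [LinearMap.finrank_range_add_finrank_ker R'.mulVecLin]
    simp
  omega
end
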